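/- Let n < m and let Z(n,m) : ℝⁿ → ℝᵐ be the wrinkled-embedding model Z(y,z) = (y, z³ + 3(|y|² − 1)z, ∫₀ᶻ (s² + |y|² − 1)² ds, 0, …, 0). The (total) derivative of Z at a point (y,z) is an injective linear map ℝⁿ → ℝᵐ if and only if |y|² + z² ≠ 1; that is, the singular set of Z(n,m) is exactly the unit sphere S^{n−1} = {(y,z) : |y|² + z² = 1} ⊂ ℝⁿ. -/

import Mathlib

/-- The wrinkled-embedding model `Z(n,m) : ℝⁿ → ℝᵐ`,
`Z(y,z) = (y, z³ + 3(|y|² − 1)z, ∫₀ᶻ (s² + |y|² − 1)² ds, 0, …, 0)`,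
where `ℝⁿ = ℝ^{n−1} × ℝ` (so `k = n−1`) and the `m − n − 1` trailing zeros are
collected in a Euclidean factor (so `l = m − n − 1`). -/
noncomputable def Zmap (k l : ℕ) (p : EuclideanSpace ℝ (Fin k) × ℝ) :
    EuclideanSpace ℝ (Fin k) × ℝ × ℝ × EuclideanSpace ℝ (Fin l) :=
  (p.1, p.2^3 + 3*(‖p.1‖^2 - 1)*p.2,
    ∫ s in (0:ℝ)..p.2, (s^2 + ‖p.1‖^2 - 1)^2, 0)

lemma integ (c z : ℝ) : ∫ s in (0:ℝ)..z, (s^2 + c)^2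
    = z^5/5 + 2*c*z^3/3 + c^2*z := by
  have h : ∀ x ∈ Set.uIcc (0:ℝ) z,
      HasDerivAt (fun s => s^5/5 + 2*c*s^3/3 + c^2*s) ((x^2+c)^2) x := by
    intro x _
    have h1 := ((hasDerivAt_pow 5 x).div_const 5).add
      ((((hasDerivAt_pow 3 x).const_mul (2*c)).div_const 3).add
        ((hasDerivAt_id x).const_mul (c^2)))
    have e : (fun s : ℝ => s^5/5 + 2*c*s^3/3 + c^2*s) = ((fun x : ℝ => x ^ 5 / 5) +
        ((fun x : ℝ => 2 * c * x ^ 3 / 3) + fun y : ℝ => c ^ 2 * id y)) := by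
      funext s; simp only [Pi.add_apply, id_eq]; ring
    rw [e]
    exact h1.congr_deriv (by push_cast; ring)
  have hc : IntervalIntegrable (fun s : ℝ => (s^2+c)^2) MeasureTheory.volume 0 z :=
    (Continuous.intervalIntegrable (by continuity) _ _)
  have := intervalIntegral.integral_eq_sub_of_hasDerivAt h hc
  simpa using this

set_option maxHeartbeats 1000000 in
theorem Zmap_main (k l : ℕ) (p : EuclideanSpace ℝ (Fin k) × ℝ) :
    Function.Injective ⇑(fderiv ℝ (Zmap k l) p) ↔ ‖p.1‖^2 + p.2^2 ≠ 1 := by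
  have hZ : Zmap k l = fun q : EuclideanSpace ℝ (Fin k) × ℝ =>
      (q.1, q.2^3 + 3*(‖q.1‖^2 - 1)*q.2,
        q.2^5/5 + 2*(‖q.1‖^2-1)*q.2^3/3 + (‖q.1‖^2-1)^2*q.2,
        (0 : EuclideanSpace ℝ (Fin l))) := by
    funext q
    simp only [Zmap, add_sub_assoc]
    rw [integ]
  set y := p.1 with hy
  set z := p.2 with hzz
  set c : ℝ := ‖y‖^2 - 1 with hc
  set J : (EuclideanSpace ℝ (Fin k) × ℝ) →L[ℝ] ℝ :=
    ((innerSL ℝ) y).comp (ContinuousLinearMap.fst ℝ _ ℝ) with hJ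
  set S : (EuclideanSpace ℝ (Fin k) × ℝ) →L[ℝ] ℝ :=
    ContinuousLinearMap.snd ℝ _ ℝ with hS
  set L : (EuclideanSpace ℝ (Fin k) × ℝ) →L[ℝ]
      EuclideanSpace ℝ (Fin k) × ℝ × ℝ × EuclideanSpace ℝ (Fin l) :=
    (ContinuousLinearMap.fst ℝ _ ℝ).prod
      (((6*z) • J + (3*(z^2+c)) • S).prod
        ((((4/3)*z^3 + 4*c*z) • J + ((z^2+c)^2) • S).prod 0)) with hL
  have hfd : HasFDerivAt (Zmap k l) L p := by
    rw [hZ]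
    have hq : HasFDerivAt (fun q : EuclideanSpace ℝ (Fin k) × ℝ => ‖q.1‖^2 - 1)
        (2 • (((innerSL ℝ) y).comp (ContinuousLinearMap.fst ℝ _ ℝ))) p :=
      ((hasFDerivAt_fst (p := p) (𝕜 := ℝ)).norm_sq).sub_const 1
    have hz2 : HasFDerivAt (fun q : EuclideanSpace ℝ (Fin k) × ℝ => q.2) S p :=
      hasFDerivAt_snd
    have hpow : ∀ j : ℕ, HasFDerivAt
        (fun q : EuclideanSpace ℝ (Fin k) × ℝ => q.2 ^ j) ((j * z^(j-1)) • S) p := by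
      intro j
      have := (hasDerivAt_pow j p.2).comp_hasFDerivAt p hz2
      exact this
    have hq2 : HasFDerivAt
        (fun q : EuclideanSpace ℝ (Fin k) × ℝ => (‖q.1‖^2 - 1)^2)
        ((2*c) • (2 • (((innerSL ℝ) y).comp (ContinuousLinearMap.fst ℝ _ ℝ)))) p := by
      have := (hasDerivAt_pow 2 (‖p.1‖^2 - 1)).comp_hasFDerivAt p hq
      exact this.congr_fderiv (by norm_num [c, y])
    have hf2 : HasFDerivAt
        (fun q : EuclideanSpace ℝ (Fin k) × ℝ => q.2^3 + 3*(‖q.1‖^2-1)*q.2)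
        ((6*z) • J + (3*(z^2+c)) • S) p := by
      have := (hpow 3).add ((hq.const_mul 3).mul hz2)
      refine this.congr_fderiv ?_
      refine ContinuousLinearMap.ext fun v => ?_
      simp [J, S, c, smul_smul, two_smul, ContinuousLinearMap.smul_apply,
        ContinuousLinearMap.add_apply, ContinuousLinearMap.comp_apply]
      ring
    have hf3 : HasFDerivAt
        (fun q : EuclideanSpace ℝ (Fin k) × ℝ =>
          q.2^5/5 + 2*(‖q.1‖^2-1)*q.2^3/3 + (‖q.1‖^2-1)^2*q.2)
        (((4/3)*z^3 + 4*c*z) • J + ((z^2+c)^2) • S) p := by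
      have := (((hpow 5).const_mul (1/5 : ℝ)).add
        (((hq.const_mul 2).mul (hpow 3)).const_mul (1/3 : ℝ))).add (hq2.mul hz2)
      refine (this.congr_fderiv ?_).congr_of_eventuallyEq (Filter.Eventually.of_forall fun q => ?_)
      · refine ContinuousLinearMap.ext fun v => ?_
        simp [J, S, c, smul_smul, two_smul, ContinuousLinearMap.smul_apply,
          ContinuousLinearMap.add_apply, ContinuousLinearMap.comp_apply]
        ring
      · simp only [Pi.add_apply, Pi.mul_apply]; ring
    exact HasFDerivAt.prodMk hasFDerivAt_fst (hf2.prodMk (hf3.prodMk (hasFDerivAt_const 0 p)))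
  rw [hfd.fderiv]
  constructor
  · intro hinj h1
    have hzc : z^2 + c = 0 := by rw [hc]; linarith
    have heq : L (0, 1) = L 0 := by
      rw [map_zero, hL]
      simp only [ContinuousLinearMap.prod_apply, ContinuousLinearMap.add_apply,
        ContinuousLinearMap.smul_apply, ContinuousLinearMap.comp_apply,
        ContinuousLinearMap.coe_fst', ContinuousLinearMap.coe_snd',
        ContinuousLinearMap.zero_apply, hJ, hS, innerSL_apply_apply,
        inner_zero_right, smul_eq_mul, mul_zero, mul_one, zero_add, add_zero, hzc]
      norm_num
    have := hinj heq
    simp [Prod.ext_iff] at this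
  · intro h1
    have hzc : z^2 + c ≠ 0 := by rw [hc]; intro h; apply h1; linarith
    rw [injective_iff_map_eq_zero]
    rintro ⟨v, w⟩ hvw
    have hv : v = 0 := by
      have := congrArg Prod.fst hvw
      simpa [hL] using this
    subst hv
    have h3 := congrArg (fun x => x.2.2.1) hvw
    simp only [hL, ContinuousLinearMap.prod_apply, ContinuousLinearMap.add_apply,
      ContinuousLinearMap.smul_apply, ContinuousLinearMap.comp_apply,
      ContinuousLinearMap.coe_fst', ContinuousLinearMap.coe_snd',
      ContinuousLinearMap.zero_apply, hJ, hS, innerSL_apply_apply,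
      inner_zero_right, smul_eq_mul, mul_zero, mul_one, zero_add, add_zero,
      Prod.snd_zero, Prod.fst_zero] at h3
    have hw : w = 0 := by
      rcases mul_eq_zero.mp h3 with h | h
      · exact absurd (pow_eq_zero_iff two_ne_zero |>.mp h) hzc
      · exact h
    simp [hw, Prod.ext_iff]

/-- The derivative of `Z(n,m)` at `(y,z)` is injective iff `|y|² + z² ≠ 1`:
the singular set of `Z(n,m)` is exactly the unit sphere `S^{n−1} ⊂ ℝⁿ`. -/
theorem Zmap_fderiv_injective_iff (n m : ℕ) (hn : 1 ≤ n) (hnm : n < m)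
    (p : EuclideanSpace ℝ (Fin (n - 1)) × ℝ) :
    Function.Injective ⇑(fderiv ℝ (Zmap (n - 1) (m - n - 1)) p) ↔
      ‖p.1‖^2 + p.2^2 ≠ 1 :=
  Zmap_main _ _ p
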